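/- arXiv:1711.06965 — 2 statements merged into one kernel-verified Lean document; each statement's English description precedes it below -/
import Mathlib

section
/- The Borel measure μ_o on (0,1) with density u ↦ 1/(u+G−1) + 1/(G+1−u) with respect to Lebesgue measure is finite and T_o-invariant: μ_o(T_o⁻¹(A)) = μ_o(A) for every Borel set A ⊆ (0,1). -/
open Set MeasureTheory Filter
open scoped ENNReal NNReal

/-- The golden ratio `G = (1+√5)/2`. -/
noncomputable def G : ℝ := (1 + Real.sqrt 5) / 2

/-- `a_o(x)`: the unique odd integer among `⌊1/x⌋`, `⌊1/x⌋ + 1`. -/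
noncomputable def aO (x : ℝ) : ℤ := if Odd ⌊1 / x⌋ then ⌊1 / x⌋ else ⌊1 / x⌋ + 1

/-- The odd-continued-fraction Gauss map `T_o(x) = |1/x − a_o(x)|`. -/
noncomputable def TO (x : ℝ) : ℝ := |1 / x - aO x|

/-- The measure `μ_o` on `(0,1)` with density `u ↦ 1/(u+G−1) + 1/(G+1−u)` with
respect to Lebesgue measure. -/
noncomputable def muO : Measure ℝ :=
  ((volume : Measure ℝ).restrict (Ioo (0 : ℝ) 1)).withDensity
    (fun u => ENNReal.ofReal (1 / (u + G - 1) + 1 / (G + 1 - u)))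

/-! ### Basic facts about the golden ratio -/

lemma G_gt_one : 1 < G := by
  have h : (1:ℝ) < Real.sqrt 5 := by
    have := Real.sqrt_lt_sqrt (by norm_num : (0:ℝ) ≤ 1) (by norm_num : (1:ℝ) < 5)
    simpa using this
  unfold G; linarith

lemma G_lt_two : G < 2 := by
  have h : Real.sqrt 5 < 3 := by
    rw [show (3:ℝ) = Real.sqrt 9 by
      rw [show (9:ℝ) = 3^2 by norm_num, Real.sqrt_sq]; norm_num]
    exact Real.sqrt_lt_sqrt (by norm_num) (by norm_num)
  unfold G; linarith

lemma G_sq : G ^ 2 = G + 1 := by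
  have h5 : Real.sqrt 5 ^ 2 = 5 := Real.sq_sqrt (by norm_num)
  unfold G; nlinarith [h5]

/-- The density of `μ_o`. -/
noncomputable def dens (u : ℝ) : ℝ := 1 / (u + G - 1) + 1 / (G + 1 - u)

lemma muO_def : muO = ((volume : Measure ℝ).restrict (Ioo (0 : ℝ) 1)).withDensity
    (fun u => ENNReal.ofReal (dens u)) := rfl

/-! ### The key algebraic identity -/

lemma key {t : ℝ} (ht : 1 < t) :
    (t ^ 2)⁻¹ * dens t⁻¹ = (t + G - 2)⁻¹ - (t + G)⁻¹ := by
  have hG := G_sq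
  have hG1 := G_gt_one
  have h0 : (0:ℝ) < t := lt_trans one_pos ht
  have hti : t⁻¹ < 1 := inv_lt_one_of_one_lt₀ ht
  have hti0 : 0 < t⁻¹ := inv_pos.2 h0
  have h1 : (0:ℝ) < t⁻¹ + G - 1 := by linarith
  have h2 : (0:ℝ) < G + 1 - t⁻¹ := by linarith
  have h3 : (0:ℝ) < t + G - 2 := by linarith
  have h4 : (0:ℝ) < t + G := by linarith
  have e1 : (0:ℝ) < 1 + (G-1)*t := by nlinarith
  have e2 : (0:ℝ) < (G+1)*t - 1 := by nlinarith
  have r1 : 1 / (t⁻¹ + G - 1) = t / (1 + (G-1)*t) := by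
    rw [div_eq_div_iff (ne_of_gt h1) (ne_of_gt e1)]; field_simp; ring
  have r2 : 1 / (G + 1 - t⁻¹) = t / ((G+1)*t - 1) := by
    rw [div_eq_div_iff (ne_of_gt h2) (ne_of_gt e2)]; field_simp
  unfold dens
  rw [r1, r2]
  have e1' : 1 + t * (G - 1) ≠ 0 := by nlinarith
  have e2' : t * (G + 1) - 1 ≠ 0 := by nlinarith
  field_simp
  linear_combination (4*t^2 + 2*t*G - 2*t - 2*t^3) * hG

/-! ### The telescoping sum -/

lemma tele {α : ℝ} (hα : 0 < α) :
    ∑' j : ℕ, ENNReal.ofReal ((2*(j:ℝ)+α)⁻¹ - (2*((j:ℝ)+1)+α)⁻¹) = ENNReal.ofReal α⁻¹ := by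
  set u : ℕ → ℝ := fun j => (2*(j:ℝ)+α)⁻¹ with hu
  have hpos : ∀ j:ℕ, (0:ℝ) < 2*(j:ℝ)+α := fun j => by positivity
  have hnn : ∀ j, 0 ≤ u j - u (j+1) := by
    intro j
    have : u (j+1) ≤ u j := by
      apply inv_anti₀ (hpos j)
      push_cast; linarith
    linarith
  have hu0 : Tendsto u atTop (nhds 0) := by
    apply Tendsto.inv_tendsto_atTop
    apply tendsto_atTop_add_const_right
    exact (tendsto_natCast_atTop_atTop (R := ℝ)).const_mul_atTop two_pos
  have hsum : HasSum (fun j => u j - u (j+1)) (u 0) := by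
    rw [hasSum_iff_tendsto_nat_of_nonneg hnn]
    have heq : ∀ n, ∑ i ∈ Finset.range n, (u i - u (i+1)) = u 0 - u n :=
      fun n => Finset.sum_range_sub' u n
    simp_rw [heq]
    simpa using tendsto_const_nhds.sub hu0
  have : ∀ j : ℕ, (2*((j:ℝ)+1)+α)⁻¹ = u (j+1) := by intro j; simp [hu]
  simp_rw [this]
  rw [← ENNReal.ofReal_tsum_of_nonneg hnn hsum.summable, hsum.tsum_eq]
  congr 1
  simp [hu]

/-! ### The inverse branches -/

/-- The inverse branch of `TO` associated with the interval `(1/(n+1), 1/n)`. -/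
noncomputable def phi (n : ℕ) (y : ℝ) : ℝ :=
  if Odd n then ((n:ℝ)+y)⁻¹ else ((n:ℝ)+1-y)⁻¹

/-- The absolute value of the derivative of `phi n`. -/
noncomputable def psi (n : ℕ) (y : ℝ) : ℝ :=
  if Odd n then (((n:ℝ)+y)^2)⁻¹ else (((n:ℝ)+1-y)^2)⁻¹

/-- The fundamental interval `(1/(n+1), 1/n)`. -/
def J (n : ℕ) : Set ℝ := Ioo ((n:ℝ)+1)⁻¹ ((n:ℝ))⁻¹

lemma mem_J_props {n : ℕ} (hn : 1 ≤ n) {x : ℝ} (hx : x ∈ J n) :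
    0 < x ∧ (n:ℝ) < 1/x ∧ 1/x < (n:ℝ)+1 := by
  have hn' : (0:ℝ) < n := by exact_mod_cast hn
  have hx0 : 0 < x := lt_trans (by positivity) hx.1
  refine ⟨hx0, ?_, ?_⟩
  · have h := inv_strictAnti₀ hx0 hx.2
    rw [inv_inv] at h
    rwa [one_div]
  · have h := inv_strictAnti₀ (by positivity : (0:ℝ) < ((n:ℝ)+1)⁻¹) hx.1
    rw [inv_inv] at h
    rwa [one_div]

lemma floor_on_J {n : ℕ} (hn : 1 ≤ n) {x : ℝ} (hx : x ∈ J n) : ⌊1/x⌋ = (n:ℤ) := by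
  obtain ⟨hx0, h1, h2⟩ := mem_J_props hn hx
  rw [Int.floor_eq_iff]
  constructor
  · push_cast; linarith
  · push_cast; linarith

lemma TO_on_J_odd {n : ℕ} (hn : 1 ≤ n) (hodd : Odd n) {x : ℝ} (hx : x ∈ J n) :
    TO x = 1/x - n := by
  obtain ⟨hx0, h1, h2⟩ := mem_J_props hn hx
  unfold TO aO
  rw [floor_on_J hn hx, if_pos ((Int.odd_coe_nat n).2 hodd)]
  rw [abs_of_pos]
  · push_cast; ring
  · push_cast; linarith

lemma TO_on_J_even {n : ℕ} (hn : 1 ≤ n) (hodd : ¬ Odd n) {x : ℝ} (hx : x ∈ J n) :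
    TO x = (n:ℝ) + 1 - 1/x := by
  obtain ⟨hx0, h1, h2⟩ := mem_J_props hn hx
  unfold TO aO
  rw [floor_on_J hn hx, if_neg (by rwa [Int.odd_coe_nat])]
  rw [abs_of_neg]
  · push_cast; ring
  · push_cast; linarith

lemma phi_mem_J {n : ℕ} (hn : 1 ≤ n) {y : ℝ} (hy : y ∈ Ioo (0:ℝ) 1) : phi n y ∈ J n := by
  have hn' : (0:ℝ) < n := by exact_mod_cast hn
  have hy0 := hy.1
  have hy1 := hy.2
  unfold phi J
  by_cases hodd : Odd n
  · rw [if_pos hodd]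
    constructor
    · exact inv_strictAnti₀ (by linarith) (by linarith)
    · exact inv_strictAnti₀ (by linarith) (by linarith)
  · rw [if_neg hodd]
    constructor
    · exact inv_strictAnti₀ (by linarith) (by linarith)
    · exact inv_strictAnti₀ (by linarith) (by linarith)

lemma TO_phi {n : ℕ} (hn : 1 ≤ n) {y : ℝ} (hy : y ∈ Ioo (0:ℝ) 1) : TO (phi n y) = y := by
  have hn' : (0:ℝ) < n := by exact_mod_cast hn
  by_cases hodd : Odd n
  · rw [TO_on_J_odd hn hodd (phi_mem_J hn hy)]
    unfold phi; rw [if_pos hodd, one_div, inv_inv]; ring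
  · rw [TO_on_J_even hn hodd (phi_mem_J hn hy)]
    unfold phi; rw [if_neg hodd, one_div, inv_inv]; ring

lemma preimage_inter_J {n : ℕ} (hn : 1 ≤ n) {A : Set ℝ} (hA : A ⊆ Ioo (0:ℝ) 1) :
    TO ⁻¹' A ∩ J n = phi n '' A := by
  ext x
  constructor
  · rintro ⟨hxA, hxJ⟩
    have hx0 : 0 < x := (mem_J_props hn hxJ).1
    by_cases hodd : Odd n
    · refine ⟨1/x - n, ?_, ?_⟩
      · rw [← TO_on_J_odd hn hodd hxJ]; exact hxA
      · unfold phi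
        rw [if_pos hodd, show (n:ℝ) + (1/x - n) = 1/x by ring, one_div, inv_inv]
    · refine ⟨(n:ℝ) + 1 - 1/x, ?_, ?_⟩
      · rw [← TO_on_J_even hn hodd hxJ]; exact hxA
      · unfold phi
        rw [if_neg hodd, show (n:ℝ) + 1 - ((n:ℝ)+1-1/x) = 1/x by ring, one_div, inv_inv]
  · rintro ⟨y, hyA, rfl⟩
    refine ⟨?_, phi_mem_J hn (hA hyA)⟩
    rw [mem_preimage, TO_phi hn (hA hyA)]
    exact hyA

/-! ### Measurability -/

lemma meas_dens : Measurable fun u : ℝ => ENNReal.ofReal (dens u) := by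
  apply Measurable.ennreal_ofReal
  unfold dens
  fun_prop

lemma meas_TO : Measurable TO := by
  have hinv : Measurable fun x : ℝ => 1/x := by fun_prop
  have hfl : Measurable fun x : ℝ => ⌊1/x⌋ := hinv.floor
  have hset : MeasurableSet {x : ℝ | Odd ⌊1/x⌋} :=
    hfl (MeasurableSet.of_discrete (s := {n : ℤ | Odd n}))
  have haO : Measurable aO := by
    unfold aO
    exact Measurable.ite hset hfl (hfl.add_const 1)
  have haO' : Measurable fun x : ℝ => ((aO x : ℤ) : ℝ) :=
    Measurable.of_discrete.comp haO
  unfold TO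
  exact (hinv.sub haO').abs

lemma meas_phi (n : ℕ) : Measurable (phi n) := by
  unfold phi; split_ifs <;> fun_prop

lemma meas_psi (n : ℕ) : Measurable (psi n) := by
  unfold psi; split_ifs <;> fun_prop

/-! ### Basic facts about `μ_o` -/

lemma muO_apply {S : Set ℝ} (hS : MeasurableSet S) :
    muO S = ∫⁻ x in S ∩ Ioo (0:ℝ) 1, ENNReal.ofReal (dens x) := by
  rw [muO_def, withDensity_apply _ hS, Measure.restrict_restrict hS]

lemma muO_null {E : Set ℝ} (hE : volume E = 0) : muO E = 0 := by
  have h1 : (volume : Measure ℝ).restrict (Ioo (0:ℝ) 1) ≪ volume :=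
    Measure.absolutelyContinuous_of_le Measure.restrict_le_self
  have h2 : muO ≪ volume := (withDensity_absolutelyContinuous _ _).trans h1
  exact h2 hE

/-! ### The pointwise sum identity -/

lemma branch_sum {y : ℝ} (hy : y ∈ Ioo (0:ℝ) 1) :
    ∑' k : ℕ, ENNReal.ofReal (psi (k+1) y) * ENNReal.ofReal (dens (phi (k+1) y))
      = ENNReal.ofReal (dens y) := by
  have hy0 := hy.1
  have hy1 := hy.2
  have hG1 := G_gt_one
  set a : ℕ → ℝ≥0∞ :=
    fun k => ENNReal.ofReal (psi (k+1) y) * ENNReal.ofReal (dens (phi (k+1) y)) with ha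
  have heven : ∀ j : ℕ,
      a (2*j) = ENNReal.ofReal ((2*(j:ℝ)+(y+G-1))⁻¹ - (2*((j:ℝ)+1)+(y+G-1))⁻¹) := by
    intro j
    have hj : (0:ℝ) ≤ (j:ℝ) := Nat.cast_nonneg j
    have hodd : Odd (2*j+1) := odd_two_mul_add_one j
    have ht : 1 < ((2*j+1:ℕ):ℝ) + y := by push_cast; linarith
    simp only [ha, phi, psi, if_pos hodd]
    rw [← ENNReal.ofReal_mul (by positivity), key ht]
    congr 1
    push_cast; ring_nf
  have hodd' : ∀ j : ℕ,
      a (2*j+1) = ENNReal.ofReal ((2*(j:ℝ)+(G+1-y))⁻¹ - (2*((j:ℝ)+1)+(G+1-y))⁻¹) := by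
    intro j
    have hj : (0:ℝ) ≤ (j:ℝ) := Nat.cast_nonneg j
    have heven2 : ¬ Odd (2*j+1+1) := by simp only [Nat.odd_iff]; omega
    have ht : 1 < ((2*j+1+1:ℕ):ℝ) + 1 - y := by push_cast; linarith
    simp only [ha, phi, psi, if_neg heven2]
    rw [← ENNReal.ofReal_mul (by positivity), key ht]
    congr 1
    push_cast; ring_nf
  rw [← tsum_even_add_odd (f := a) ENNReal.summable ENNReal.summable]
  rw [tsum_congr heven, tsum_congr hodd']
  rw [tele (by linarith : (0:ℝ) < y + G - 1), tele (by linarith : (0:ℝ) < G + 1 - y)]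
  rw [← ENNReal.ofReal_add (le_of_lt (inv_pos.2 (by linarith))) (le_of_lt (inv_pos.2 (by linarith)))]
  congr 1
  unfold dens
  rw [one_div, one_div]

/-! ### Change of variables for a single branch -/

lemma lintegral_image_1d {s : Set ℝ} {f f' : ℝ → ℝ} (hs : MeasurableSet s)
    (hf' : ∀ x ∈ s, HasDerivWithinAt f (f' x) s x) (hf : InjOn f s) (g : ℝ → ℝ≥0∞) :
    ∫⁻ x in f '' s, g x = ∫⁻ x in s, ENNReal.ofReal |f' x| * g (f x) := by
  simpa only [ContinuousLinearMap.det_toSpanSingleton] using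
    MeasureTheory.lintegral_image_eq_lintegral_abs_det_fderiv_mul volume hs
      (fun x hx => (hf' x hx).hasFDerivWithinAt) hf g

lemma branch_change {n : ℕ} (hn : 1 ≤ n) {A : Set ℝ} (hAm : MeasurableSet A)
    (hA : A ⊆ Ioo (0:ℝ) 1) :
    ∫⁻ x in phi n '' A, ENNReal.ofReal (dens x)
      = ∫⁻ y in A, ENNReal.ofReal (psi n y) * ENNReal.ofReal (dens (phi n y)) := by
  have hn' : (0:ℝ) < n := by exact_mod_cast hn
  by_cases hodd : Odd n
  · have hderiv : ∀ y ∈ A, HasDerivWithinAt (phi n) (-(((n:ℝ)+y)^2)⁻¹) A y := by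
      intro y hyA
      have hy := hA hyA
      have hpos : (0:ℝ) < (n:ℝ) + y := by linarith [hy.1]
      have hne : (n:ℝ) + y ≠ 0 := ne_of_gt hpos
      have h1 : HasDerivAt (fun z : ℝ => (n:ℝ) + z) 1 y := by
        simpa using (hasDerivAt_id y).const_add (n:ℝ)
      have h2 := h1.inv hne
      have h3 : HasDerivAt (fun z : ℝ => ((n:ℝ)+z)⁻¹) (-(((n:ℝ)+y)^2)⁻¹) y := by
        convert h2 using 1 <;> first | rfl | ring
      have heq : phi n = fun z : ℝ => ((n:ℝ)+z)⁻¹ := by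
        funext z; unfold phi; rw [if_pos hodd]
      rw [heq]
      exact h3.hasDerivWithinAt
    have hinj : InjOn (phi n) A := by
      intro x₁ h₁ x₂ h₂ he
      unfold phi at he; rw [if_pos hodd, if_pos hodd] at he
      have := inv_injective he
      linarith
    rw [lintegral_image_1d hAm hderiv hinj]
    apply setLIntegral_congr_fun hAm
    intro y hyA
    have hy := hA hyA
    have hpos : (0:ℝ) < (n:ℝ) + y := by linarith [hy.1]
    have : |(-(((n:ℝ)+y)^2)⁻¹)| = psi n y := by
      unfold psi
      rw [if_pos hodd, abs_neg, abs_of_pos (inv_pos.2 (pow_pos hpos 2))]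
    simp only [this]
  · have hderiv : ∀ y ∈ A, HasDerivWithinAt (phi n) ((((n:ℝ)+1-y)^2)⁻¹) A y := by
      intro y hyA
      have hy := hA hyA
      have hpos : (0:ℝ) < (n:ℝ) + 1 - y := by linarith [hy.2]
      have hne : (n:ℝ) + 1 - y ≠ 0 := ne_of_gt hpos
      have h1 : HasDerivAt (fun z : ℝ => (n:ℝ) + 1 - z) (-1) y := by
        simpa using (hasDerivAt_id y).const_sub ((n:ℝ)+1)
      have h2 := h1.inv hne
      have h3 : HasDerivAt (fun z : ℝ => ((n:ℝ)+1-z)⁻¹) ((((n:ℝ)+1-y)^2)⁻¹) y := by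
        convert h2 using 1 <;> first | rfl | ring
      have heq : phi n = fun z : ℝ => ((n:ℝ)+1-z)⁻¹ := by
        funext z; unfold phi; rw [if_neg hodd]
      rw [heq]
      exact h3.hasDerivWithinAt
    have hinj : InjOn (phi n) A := by
      intro x₁ h₁ x₂ h₂ he
      unfold phi at he; rw [if_neg hodd, if_neg hodd] at he
      have := inv_injective he
      linarith
    rw [lintegral_image_1d hAm hderiv hinj]
    apply setLIntegral_congr_fun hAm
    intro y hyA
    have hy := hA hyA
    have hpos : (0:ℝ) < (n:ℝ) + 1 - y := by linarith [hy.2]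
    have : |(((n:ℝ)+1-y)^2)⁻¹| = psi n y := by
      unfold psi
      rw [if_neg hodd, abs_of_pos (inv_pos.2 (pow_pos hpos 2))]
    simp only [this]

/-! ### Decomposition of the unit interval -/

lemma J_subset {n : ℕ} (hn : 1 ≤ n) : J n ⊆ Ioo (0:ℝ) 1 := by
  have hn' : (1:ℝ) ≤ n := by exact_mod_cast hn
  intro x hx
  constructor
  · exact lt_trans (by positivity) hx.1
  · calc x < ((n:ℝ))⁻¹ := hx.2
      _ ≤ 1 := by
        rw [inv_le_one_iff₀]; right; exact hn'

lemma J_disjoint : Pairwise (Function.onFun Disjoint (fun k : ℕ => J (k+1))) := by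
  have hkey : ∀ m n : ℕ, m < n → Disjoint (J (m+1)) (J (n+1)) := by
    intro m n hmn
    rw [Set.disjoint_left]
    intro x hxm hxn
    have h1 : x < ((n+1:ℕ):ℝ)⁻¹ := by exact_mod_cast hxn.2
    have h2 : (((m+1:ℕ):ℝ)+1)⁻¹ < x := hxm.1
    have h3 : ((n+1:ℕ):ℝ)⁻¹ ≤ (((m+1:ℕ):ℝ)+1)⁻¹ := by
      apply inv_anti₀ (by positivity)
      push_cast
      have : (m:ℝ) + 1 ≤ n := by exact_mod_cast hmn
      linarith
    linarith
  intro i j hij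
  rcases lt_or_gt_of_ne hij with h | h
  · exact hkey i j h
  · exact (hkey j i h).symm

lemma Ioo_subset_union :
    Ioo (0:ℝ) 1 ⊆ (⋃ k : ℕ, J (k+1)) ∪ Set.range (fun n : ℕ => ((n:ℝ))⁻¹) := by
  intro x hx
  have hx0 := hx.1
  have hx1 := hx.2
  have hxi : 1 < x⁻¹ := by
    have := inv_strictAnti₀ hx0 hx1
    simpa using this
  set m : ℤ := ⌊x⁻¹⌋ with hm
  have hm1 : 1 ≤ m := by
    rw [hm, Int.le_floor]; exact_mod_cast hxi.le
  set n : ℕ := m.toNat with hndef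
  have hn1 : 1 ≤ n := by omega
  have hnm : (n:ℝ) = (m:ℝ) := by
    rw [hndef]; exact_mod_cast Int.toNat_of_nonneg (by omega)
  have hfl : (n:ℝ) ≤ x⁻¹ := by rw [hnm, hm]; exact Int.floor_le _
  have hfu : x⁻¹ < (n:ℝ) + 1 := by rw [hnm, hm]; exact Int.lt_floor_add_one _
  by_cases he : x⁻¹ = (n:ℝ)
  · right
    exact ⟨n, show ((n:ℝ))⁻¹ = x by rw [← he, inv_inv]⟩
  · left
    have hlt : (n:ℝ) < x⁻¹ := lt_of_le_of_ne hfl (Ne.symm he)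
    refine mem_iUnion.2 ⟨n - 1, ?_⟩
    have hrw : n - 1 + 1 = n := Nat.succ_pred_eq_of_pos hn1
    rw [hrw]
    constructor
    · have := inv_strictAnti₀ (by positivity : (0:ℝ) < x⁻¹) hfu
      rwa [inv_inv] at this
    · have := inv_strictAnti₀ (by exact_mod_cast hn1 : (0:ℝ) < (n:ℝ)) hlt
      rwa [inv_inv] at this

/-! ### Main theorem -/

/-- `μ_o` is a finite `T_o`-invariant measure on `(0,1)`. -/
theorem muO_finite_and_invariant :
    IsFiniteMeasure muO ∧
    ∀ A : Set ℝ, MeasurableSet A → A ⊆ Ioo (0 : ℝ) 1 →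
      muO (TO ⁻¹' A) = muO A := by
  have hG1 := G_gt_one
  constructor
  · -- finiteness
    constructor
    rw [muO_apply MeasurableSet.univ, univ_inter]
    have hb : ∀ x ∈ Ioo (0:ℝ) 1,
        ENNReal.ofReal (dens x) ≤ ENNReal.ofReal ((G-1)⁻¹ + G⁻¹) := by
      intro x hx
      apply ENNReal.ofReal_le_ofReal
      unfold dens
      have t1 : 1/(x+G-1) ≤ (G-1)⁻¹ := by
        rw [one_div]; apply inv_anti₀ (by linarith) (by linarith [hx.1])
      have t2 : 1/(G+1-x) ≤ G⁻¹ := by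
        rw [one_div]; apply inv_anti₀ (by linarith) (by linarith [hx.2])
      linarith
    calc ∫⁻ x in Ioo (0:ℝ) 1, ENNReal.ofReal (dens x)
        ≤ ∫⁻ _ in Ioo (0:ℝ) 1, ENNReal.ofReal ((G-1)⁻¹ + G⁻¹) :=
          setLIntegral_mono measurable_const hb
      _ = ENNReal.ofReal ((G-1)⁻¹ + G⁻¹) * volume (Ioo (0:ℝ) 1) :=
          setLIntegral_const _ _
      _ < ⊤ := by
          apply ENNReal.mul_lt_top ENNReal.ofReal_lt_top
          rw [Real.volume_Ioo]
          exact ENNReal.ofReal_lt_top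
  · -- invariance
    intro A hAm hA
    have hS : MeasurableSet (TO ⁻¹' A) := meas_TO hAm
    have hJm : ∀ k : ℕ, MeasurableSet (J (k+1)) := fun k => measurableSet_Ioo
    have hUm : MeasurableSet (⋃ k : ℕ, J (k+1)) := MeasurableSet.iUnion hJm
    -- reduce to the union of the fundamental intervals
    have hEq : muO (TO ⁻¹' A) = muO (TO ⁻¹' A ∩ ⋃ k : ℕ, J (k+1)) := by
      apply le_antisymm
      · have hsub : TO ⁻¹' A ⊆ (TO ⁻¹' A ∩ ⋃ k : ℕ, J (k+1)) ∪
            ((Ioo (0:ℝ) 1)ᶜ ∪ Set.range (fun n : ℕ => ((n:ℝ))⁻¹)) := by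
          intro x hxA
          by_cases hx : x ∈ Ioo (0:ℝ) 1
          · rcases Ioo_subset_union hx with h | h
            · exact Or.inl ⟨hxA, h⟩
            · exact Or.inr (Or.inr h)
          · exact Or.inr (Or.inl hx)
        have hnull : muO ((Ioo (0:ℝ) 1)ᶜ ∪ Set.range (fun n : ℕ => ((n:ℝ))⁻¹)) = 0 := by
          apply measure_union_null
          · rw [muO_apply measurableSet_Ioo.compl, compl_inter_self]
            simp
          · exact muO_null ((Set.countable_range _).measure_zero _)
        calc muO (TO ⁻¹' A)
            ≤ muO ((TO ⁻¹' A ∩ ⋃ k : ℕ, J (k+1)) ∪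
              ((Ioo (0:ℝ) 1)ᶜ ∪ Set.range (fun n : ℕ => ((n:ℝ))⁻¹))) := measure_mono hsub
          _ ≤ muO (TO ⁻¹' A ∩ ⋃ k : ℕ, J (k+1)) +
              muO ((Ioo (0:ℝ) 1)ᶜ ∪ Set.range (fun n : ℕ => ((n:ℝ))⁻¹)) := measure_union_le _ _
          _ = muO (TO ⁻¹' A ∩ ⋃ k : ℕ, J (k+1)) := by rw [hnull, add_zero]
      · exact measure_mono inter_subset_left
    rw [hEq, inter_iUnion]
    rw [measure_iUnion
      (fun i j hij => ((J_disjoint hij).mono inter_subset_right inter_subset_right))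
      (fun k => hS.inter (hJm k))]
    -- evaluate each branch
    have hbranch : ∀ k : ℕ, muO (TO ⁻¹' A ∩ J (k+1))
        = ∫⁻ y in A, ENNReal.ofReal (psi (k+1) y) * ENNReal.ofReal (dens (phi (k+1) y)) := by
      intro k
      have hk1 : 1 ≤ k + 1 := Nat.le_add_left 1 k
      have hJsub : TO ⁻¹' A ∩ J (k+1) ⊆ Ioo (0:ℝ) 1 :=
        fun x hx => J_subset hk1 hx.2
      rw [muO_apply (hS.inter (hJm k)), inter_eq_self_of_subset_left hJsub,
        preimage_inter_J hk1 hA, branch_change hk1 hAm hA]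
    simp_rw [hbranch]
    have hswap := lintegral_tsum (μ := volume.restrict A)
      (f := fun (k : ℕ) (y : ℝ) =>
        ENNReal.ofReal (psi (k+1) y) * ENNReal.ofReal (dens (phi (k+1) y)))
      (fun k => by
        exact ((meas_psi (k+1)).ennreal_ofReal.mul
          (meas_dens.comp (meas_phi (k+1)))).aemeasurable)
    rw [← hswap]
    rw [setLIntegral_congr_fun hAm (fun y hy => branch_sum (hA hy))]
    rw [muO_apply hAm, inter_eq_self_of_subset_left hA]
end

section
/- An irrational number x ∈ (0,1) satisfies T_o^m(x) = T_o^n(x) for some integers 0 ≤ m < n (i.e. its odd continued fraction expansion is eventually periodic) if and only if x is a quadratic irrational. -/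
noncomputable def epsO (x : ℝ) : ℤ := if Odd ⌊1 / x⌋ then 1 else -1

lemma epsO_cases (x : ℝ) : epsO x = 1 ∨ epsO x = -1 := by
  unfold epsO; split <;> simp

lemma step_facts (y : ℝ) (h0 : 0 < y) (h1 : y < 1) (hirr : Irrational y) :
    (0 < TO y ∧ TO y < 1 ∧ Irrational (TO y)) ∧ 1 ≤ aO y ∧
    (epsO y = -1 → 3 ≤ aO y) ∧ 1 / y = (aO y : ℝ) + (epsO y : ℝ) * TO y := by
  have hy1 : 1 < 1 / y := by rw [lt_div_iff₀ h0]; linarith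
  have hirr1 : Irrational (1 / y) := by rw [one_div]; exact hirr.inv
  have hfl : 1 ≤ ⌊1 / y⌋ := Int.le_floor.mpr (by exact_mod_cast hy1.le)
  have hlow : (⌊1 / y⌋ : ℝ) < 1 / y := by
    rcases lt_or_eq_of_le (Int.floor_le (1 / y)) with h | h
    · exact h
    · exact absurd h.symm (hirr1.ne_int ⌊1 / y⌋)
  have hhigh : 1 / y < ⌊1 / y⌋ + 1 := Int.lt_floor_add_one _
  by_cases hodd : Odd ⌊1 / y⌋
  · have ha : aO y = ⌊1 / y⌋ := by simp only [aO, if_pos hodd]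
    have he : epsO y = 1 := by simp only [epsO, if_pos hodd]
    have hTO : TO y = 1 / y - ⌊1 / y⌋ := by
      rw [TO, ha, abs_of_pos (by linarith)]
    refine ⟨⟨by rw [hTO]; linarith, by rw [hTO]; push_cast at hhigh ⊢; linarith, ?_⟩,
      by rw [ha]; exact hfl, by rw [he]; intro h; omega, ?_⟩
    · rw [hTO]; exact hirr1.sub_intCast _
    · rw [hTO, ha, he]; push_cast; ring
  · have heven : Even ⌊1 / y⌋ := Int.not_odd_iff_even.mp hodd
    have ha : aO y = ⌊1 / y⌋ + 1 := by simp only [aO]; rw [if_neg hodd]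
    have he : epsO y = -1 := by simp only [epsO]; rw [if_neg hodd]
    have hTO : TO y = (⌊1 / y⌋ + 1 : ℝ) - 1 / y := by
      rw [TO, ha]; push_cast; rw [abs_of_neg (by linarith)]; ring
    have hf2 : 2 ≤ ⌊1 / y⌋ := by
      rcases heven with ⟨c, hc⟩; omega
    refine ⟨⟨by rw [hTO]; push_cast at hhigh ⊢; linarith, by rw [hTO]; linarith, ?_⟩,
      by rw [ha]; omega, by rw [ha]; intro h; omega, ?_⟩
    · rw [hTO]
      have key : ((⌊1 / y⌋ : ℝ) + 1) - 1 / y = ((⌊1 / y⌋ + 1 : ℤ) : ℝ) - 1 / y := by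
        push_cast; ring
      rw [key]; exact hirr1.intCast_sub _
    · rw [hTO, ha, he]; push_cast; ring

lemma orbit (x : ℝ) (h0 : 0 < x) (h1 : x < 1) (hirr : Irrational x) (k : ℕ) :
    0 < TO^[k] x ∧ TO^[k] x < 1 ∧ Irrational (TO^[k] x) := by
  induction k with
  | zero => exact ⟨h0, h1, hirr⟩
  | succ k ih =>
    rw [Function.iterate_succ_apply']
    exact (step_facts _ ih.1 ih.2.1 ih.2.2).1

noncomputable def PQ (x : ℝ) : ℕ → ℤ × ℤ
  | 0 => (1, 0)
  | n+1 => (epsO (TO^[n] x) * (PQ x n).2, (PQ x n).1 + aO (TO^[n] x) * (PQ x n).2)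

noncomputable def RS (x : ℝ) : ℕ → ℤ × ℤ
  | 0 => (0, 1)
  | n+1 => (epsO (TO^[n] x) * (RS x n).2, (RS x n).1 + aO (TO^[n] x) * (RS x n).2)

lemma hu_fact (y : ℝ) (h0 : 0 < y) (h1 : y < 1) (hirr : Irrational y) :
    y * ((aO y : ℝ) + (epsO y : ℝ) * TO y) = 1 := by
  have h := (step_facts y h0 h1 hirr).2.2.2
  rw [← h]; field_simp

lemma main_id (x : ℝ) (h0 : 0 < x) (h1 : x < 1) (hirr : Irrational x) (k : ℕ) :
    x * (((RS x k).1 : ℝ) * TO^[k] x + ((RS x k).2 : ℝ)) =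
      ((PQ x k).1 : ℝ) * TO^[k] x + ((PQ x k).2 : ℝ) := by
  induction k with
  | zero => simp [PQ, RS]
  | succ k ih =>
    obtain ⟨hy0, hy1, hyirr⟩ := orbit x h0 h1 hirr k
    have hu := hu_fact _ hy0 hy1 hyirr
    rw [Function.iterate_succ_apply']
    simp only [PQ, RS]
    push_cast
    linear_combination ((aO (TO^[k] x) : ℝ) + (epsO (TO^[k] x) : ℝ) * TO (TO^[k] x)) * ih
      + (((PQ x k).1 : ℝ) - x * ((RS x k).1 : ℝ)) * hu

lemma det_pm (x : ℝ) (k : ℕ) :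
    (PQ x k).1 * (RS x k).2 - (PQ x k).2 * (RS x k).1 = 1 ∨
    (PQ x k).1 * (RS x k).2 - (PQ x k).2 * (RS x k).1 = -1 := by
  induction k with
  | zero => left; norm_num [PQ, RS]
  | succ k ih =>
    simp only [PQ, RS]
    rcases epsO_cases (TO^[k] x) with he | he <;> rw [he] <;>
      rcases ih with h | h
    · right; linear_combination -h
    · left; linear_combination -h
    · left; linear_combination h
    · right; linear_combination h

lemma aO_ge (x : ℝ) (h0 : 0 < x) (h1 : x < 1) (hirr : Irrational x) (k : ℕ) :
    1 ≤ aO (TO^[k] x) ∧ (epsO (TO^[k] x) = -1 → 3 ≤ aO (TO^[k] x)) := by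
  obtain ⟨hy0, hy1, hyirr⟩ := orbit x h0 h1 hirr k
  exact ⟨(step_facts _ hy0 hy1 hyirr).2.1, (step_facts _ hy0 hy1 hyirr).2.2.1⟩

lemma S_inv (x : ℝ) (h0 : 0 < x) (h1 : x < 1) (hirr : Irrational x) (k : ℕ) :
    1 ≤ (RS x k).2 ∧ 1 ≤ (RS x (k+1)).2 ∧
      (epsO (TO^[k] x) = -1 → 2 * (RS x k).2 ≤ (RS x (k+1)).2) ∧
      (RS x k).2 ≤ 2 * (RS x (k+1)).2 := by
  induction k with
  | zero =>
    obtain ⟨ha1, ha3⟩ := aO_ge x h0 h1 hirr 0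
    simp only [RS]
    refine ⟨le_refl 1, by omega, fun he => ?_, by omega⟩
    have := ha3 he; omega
  | succ k ih =>
    obtain ⟨hS0, hS1, hcl, hdb⟩ := ih
    obtain ⟨ha1, ha3⟩ := aO_ge x h0 h1 hirr (k+1)
    have hrec : (RS x (k+2)).2 = epsO (TO^[k] x) * (RS x k).2
        + aO (TO^[k+1] x) * (RS x (k+1)).2 := by
      simp only [RS]
    refine ⟨hS1, ?_, ?_, ?_⟩
    · rcases epsO_cases (TO^[k] x) with he | he <;> rw [he] at hrec
      · nlinarith
      · have := hcl he; nlinarith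
    · intro he1
      have ha3' := ha3 he1
      rcases epsO_cases (TO^[k] x) with he | he <;> rw [he] at hrec
      · nlinarith
      · have := hcl he; nlinarith
    · rcases epsO_cases (TO^[k] x) with he | he <;> rw [he] at hrec
      · nlinarith
      · have := hcl he; nlinarith

lemma D_ge_one (x : ℝ) (h0 : 0 < x) (h1 : x < 1) (hirr : Irrational x) (k : ℕ) :
    1 ≤ ((RS x k).1 : ℝ) * TO^[k] x + ((RS x k).2 : ℝ) := by
  induction k with
  | zero => simp [RS]
  | succ k ih =>
    obtain ⟨hy0, hy1, hyirr⟩ := orbit x h0 h1 hirr k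
    have hu := hu_fact _ hy0 hy1 hyirr
    have hu1 : 1 < (aO (TO^[k] x) : ℝ) + (epsO (TO^[k] x) : ℝ) * TO (TO^[k] x) := by
      nlinarith
    have heq : ((RS x (k+1)).1 : ℝ) * TO^[k+1] x + ((RS x (k+1)).2 : ℝ) =
        (((RS x k).1 : ℝ) * TO^[k] x + ((RS x k).2 : ℝ)) *
          ((aO (TO^[k] x) : ℝ) + (epsO (TO^[k] x) : ℝ) * TO (TO^[k] x)) := by
      rw [Function.iterate_succ_apply']
      simp only [RS]
      push_cast
      linear_combination (-((RS x k).1 : ℝ)) * hu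
    rw [heq]; nlinarith

lemma D_pos (x : ℝ) (h0 : 0 < x) (h1 : x < 1) (hirr : Irrational x) (k : ℕ) :
    0 < ((RS x k).1 : ℝ) * TO^[k] x + ((RS x k).2 : ℝ) :=
  lt_of_lt_of_le one_pos (D_ge_one x h0 h1 hirr k)

lemma two_D_ge_S (x : ℝ) (h0 : 0 < x) (h1 : x < 1) (hirr : Irrational x) (k : ℕ) :
    ((RS x k).2 : ℝ) ≤ 2 * (((RS x k).1 : ℝ) * TO^[k] x + ((RS x k).2 : ℝ)) := by
  cases k with
  | zero => norm_num [RS]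
  | succ k =>
    obtain ⟨hy0, hy1, hyirr⟩ := orbit x h0 h1 hirr (k+1)
    have hR : (RS x (k+1)).1 = epsO (TO^[k] x) * (RS x k).2 := by simp only [RS]
    obtain ⟨hS0, hS1, hcl, hdb⟩ := S_inv x h0 h1 hirr k
    rcases epsO_cases (TO^[k] x) with he | he <;> rw [he] at hR
    · rw [hR]
      have hS0' : (1 : ℝ) ≤ ((RS x k).2 : ℝ) := by exact_mod_cast hS0
      have hS1' : (1 : ℝ) ≤ ((RS x (k+1)).2 : ℝ) := by exact_mod_cast hS1
      push_cast
      nlinarith [mul_nonneg (by linarith : (0:ℝ) ≤ ((RS x k).2 : ℝ)) hy0.le]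
    · rw [hR]
      have h2 : (2 * (RS x k).2 : ℝ) ≤ ((RS x (k+1)).2 : ℝ) := by exact_mod_cast hcl he
      have hS0' : (1 : ℝ) ≤ ((RS x k).2 : ℝ) := by exact_mod_cast hS0
      push_cast
      nlinarith [mul_le_mul_of_nonneg_left hy1.le (by linarith : (0:ℝ) ≤ 2 * ((RS x k).2 : ℝ))]

lemma pxr_id (x : ℝ) (h0 : 0 < x) (h1 : x < 1) (hirr : Irrational x) (k : ℕ) :
    (((PQ x k).1 : ℝ) - x * ((RS x k).1 : ℝ)) *
        (((RS x k).1 : ℝ) * TO^[k] x + ((RS x k).2 : ℝ)) =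
      (((PQ x k).1 * (RS x k).2 - (PQ x k).2 * (RS x k).1 : ℤ) : ℝ) := by
  push_cast
  linear_combination (-((RS x k).1 : ℝ)) * main_id x h0 h1 hirr k

lemma qxs_id (x : ℝ) (h0 : 0 < x) (h1 : x < 1) (hirr : Irrational x) (k : ℕ) :
    (((PQ x k).2 : ℝ) - x * ((RS x k).2 : ℝ)) *
        (((RS x k).1 : ℝ) * TO^[k] x + ((RS x k).2 : ℝ)) =
      -(((PQ x k).1 * (RS x k).2 - (PQ x k).2 * (RS x k).1 : ℤ) : ℝ) * TO^[k] x := by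
  push_cast
  linear_combination (-((RS x k).2 : ℝ)) * main_id x h0 h1 hirr k

lemma abs_det_one (x : ℝ) (k : ℕ) :
    |(((PQ x k).1 * (RS x k).2 - (PQ x k).2 * (RS x k).1 : ℤ) : ℝ)| = 1 := by
  rcases det_pm x k with h | h <;> rw [h] <;> norm_num

lemma R_abs_le (x : ℝ) (h0 : 0 < x) (h1 : x < 1) (hirr : Irrational x) (k : ℕ) :
    |((RS x k).1 : ℝ)| ≤ 4 * (((RS x k).1 : ℝ) * TO^[k] x + ((RS x k).2 : ℝ)) := by
  cases k with
  | zero =>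
    have := D_ge_one x h0 h1 hirr 0
    simp only [RS] at this ⊢
    push_cast at this ⊢
    rw [abs_zero]; linarith
  | succ k =>
    have hR : (RS x (k+1)).1 = epsO (TO^[k] x) * (RS x k).2 := by simp only [RS]
    obtain ⟨hS0, hS1, hcl, hdb⟩ := S_inv x h0 h1 hirr k
    have h2D := two_D_ge_S x h0 h1 hirr (k+1)
    have heps1 : |((epsO (TO^[k] x) : ℤ) : ℝ)| = 1 := by
      rcases epsO_cases (TO^[k] x) with he | he <;> rw [he] <;> norm_num
    have habs : |((RS x (k+1)).1 : ℝ)| = ((RS x k).2 : ℝ) := by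
      rw [hR, Int.cast_mul, abs_mul, heps1, one_mul,
        abs_of_pos (show (0:ℝ) < ((RS x k).2 : ℝ) by exact_mod_cast hS0)]
    rw [habs]
    have hdb' : ((RS x k).2 : ℝ) ≤ 2 * ((RS x (k+1)).2 : ℝ) := by exact_mod_cast hdb
    linarith

lemma pxr_abs (x : ℝ) (h0 : 0 < x) (h1 : x < 1) (hirr : Irrational x) (k : ℕ) :
    |((PQ x k).1 : ℝ) - x * ((RS x k).1 : ℝ)| ≤ 1 ∧
    |((PQ x k).1 : ℝ) - x * ((RS x k).1 : ℝ)| * |((RS x k).1 : ℝ)| ≤ 4 := by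
  have hD1 := D_ge_one x h0 h1 hirr k
  have hDpos := D_pos x h0 h1 hirr k
  have habs : |((PQ x k).1 : ℝ) - x * ((RS x k).1 : ℝ)| *
      (((RS x k).1 : ℝ) * TO^[k] x + ((RS x k).2 : ℝ)) = 1 := by
    have h := congrArg abs (pxr_id x h0 h1 hirr k)
    rw [abs_mul, abs_of_pos hDpos, abs_det_one] at h
    exact h
  have hR4 := R_abs_le x h0 h1 hirr k
  constructor
  · nlinarith [abs_nonneg (((PQ x k).1 : ℝ) - x * ((RS x k).1 : ℝ))]
  · nlinarith [abs_nonneg (((PQ x k).1 : ℝ) - x * ((RS x k).1 : ℝ)),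
      mul_le_mul_of_nonneg_left hR4 (abs_nonneg (((PQ x k).1 : ℝ) - x * ((RS x k).1 : ℝ)))]

lemma qxs_abs (x : ℝ) (h0 : 0 < x) (h1 : x < 1) (hirr : Irrational x) (k : ℕ) :
    |((PQ x k).2 : ℝ) - x * ((RS x k).2 : ℝ)| ≤ 1 ∧
    |((PQ x k).2 : ℝ) - x * ((RS x k).2 : ℝ)| * |((RS x k).2 : ℝ)| ≤ 2 := by
  have hD1 := D_ge_one x h0 h1 hirr k
  have hDpos := D_pos x h0 h1 hirr k
  obtain ⟨hy0, hy1, -⟩ := orbit x h0 h1 hirr k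
  have habs : |((PQ x k).2 : ℝ) - x * ((RS x k).2 : ℝ)| *
      (((RS x k).1 : ℝ) * TO^[k] x + ((RS x k).2 : ℝ)) = TO^[k] x := by
    have h := congrArg abs (qxs_id x h0 h1 hirr k)
    rw [abs_mul, abs_of_pos hDpos, abs_mul, abs_neg, abs_det_one, one_mul,
      abs_of_pos hy0] at h
    exact h
  have hS2D := two_D_ge_S x h0 h1 hirr k
  have hS1 : 1 ≤ (RS x k).2 := (S_inv x h0 h1 hirr k).1
  have hSabs : |((RS x k).2 : ℝ)| = ((RS x k).2 : ℝ) :=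
    abs_of_pos (by exact_mod_cast hS1)
  constructor
  · nlinarith [abs_nonneg (((PQ x k).2 : ℝ) - x * ((RS x k).2 : ℝ))]
  · rw [hSabs]
    nlinarith [abs_nonneg (((PQ x k).2 : ℝ) - x * ((RS x k).2 : ℝ)),
      mul_le_mul_of_nonneg_left hS2D (abs_nonneg (((PQ x k).2 : ℝ) - x * ((RS x k).2 : ℝ)))]

noncomputable def fA (x : ℝ) (A B C : ℤ) (k : ℕ) : ℤ :=
  A * (PQ x k).1^2 + B * (PQ x k).1 * (RS x k).1 + C * (RS x k).1^2

noncomputable def fB (x : ℝ) (A B C : ℤ) (k : ℕ) : ℤ :=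
  2*A*(PQ x k).1*(PQ x k).2 + B*((PQ x k).1*(RS x k).2 + (PQ x k).2*(RS x k).1)
    + 2*C*(RS x k).1*(RS x k).2

noncomputable def fC (x : ℝ) (A B C : ℤ) (k : ℕ) : ℤ :=
  A * (PQ x k).2^2 + B * (PQ x k).2 * (RS x k).2 + C * (RS x k).2^2

lemma disc_id (x : ℝ) (A B C : ℤ) (k : ℕ) :
    (fB x A B C k)^2 - 4 * fA x A B C k * fC x A B C k =
      (B^2 - 4*A*C) * ((PQ x k).1 * (RS x k).2 - (PQ x k).2 * (RS x k).1)^2 := by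
  simp only [fA, fB, fC]; ring

lemma troot (x : ℝ) (h0 : 0 < x) (h1 : x < 1) (hirr : Irrational x) (A B C : ℤ)
    (hx : (A:ℝ)*x^2 + B*x + C = 0) (k : ℕ) :
    (fA x A B C k : ℝ) * (TO^[k] x)^2 + (fB x A B C k : ℝ) * TO^[k] x
      + (fC x A B C k : ℝ) = 0 := by
  have hmain := main_id x h0 h1 hirr k
  simp only [fA, fB, fC]
  push_cast
  linear_combination (((RS x k).1 : ℝ) * TO^[k] x + ((RS x k).2 : ℝ))^2 * hx
    - ((A:ℝ) * ((((PQ x k).1 : ℝ) * TO^[k] x + ((PQ x k).2 : ℝ))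
        + x * (((RS x k).1 : ℝ) * TO^[k] x + ((RS x k).2 : ℝ)))
      + (B:ℝ) * (((RS x k).1 : ℝ) * TO^[k] x + ((RS x k).2 : ℝ))) * hmain

lemma fA_eq (x : ℝ) (A B C : ℤ) (hx : (A:ℝ)*x^2 + B*x + C = 0) (k : ℕ) :
    (fA x A B C k : ℝ) = (A:ℝ) * (((PQ x k).1 : ℝ) - x * ((RS x k).1 : ℝ))^2
      + 2*(A:ℝ)*x*((((PQ x k).1 : ℝ) - x * ((RS x k).1 : ℝ)) * ((RS x k).1 : ℝ))
      + (B:ℝ)*((((PQ x k).1 : ℝ) - x * ((RS x k).1 : ℝ)) * ((RS x k).1 : ℝ)) := by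
  simp only [fA]; push_cast
  linear_combination ((RS x k).1 : ℝ)^2 * hx

lemma fC_eq (x : ℝ) (A B C : ℤ) (hx : (A:ℝ)*x^2 + B*x + C = 0) (k : ℕ) :
    (fC x A B C k : ℝ) = (A:ℝ) * (((PQ x k).2 : ℝ) - x * ((RS x k).2 : ℝ))^2
      + 2*(A:ℝ)*x*((((PQ x k).2 : ℝ) - x * ((RS x k).2 : ℝ)) * ((RS x k).2 : ℝ))
      + (B:ℝ)*((((PQ x k).2 : ℝ) - x * ((RS x k).2 : ℝ)) * ((RS x k).2 : ℝ)) := by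
  simp only [fC]; push_cast
  linear_combination ((RS x k).2 : ℝ)^2 * hx

lemma abs_quadform_bound (A B : ℝ) (u w X : ℝ) (hu : |u| ≤ 1) (huw : |u * w| ≤ 4)
    (hX : |X| ≤ 1) : |A * u^2 + 2*A*X*(u*w) + B*(u*w)| ≤ 9*|A| + 4*|B| := by
  have h1 : |A * u^2| ≤ |A| := by
    rw [abs_mul, abs_pow]
    have hu2 : |u|^2 ≤ 1 := by nlinarith [abs_nonneg u]
    nlinarith [abs_nonneg A, mul_le_mul_of_nonneg_left hu2 (abs_nonneg A)]
  have h2 : |2*A*X*(u*w)| ≤ 8*|A| := by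
    have e : |2*A*X*(u*w)| = 2 * |A| * (|X| * |u * w|) := by
      rw [abs_mul, abs_mul, abs_mul, abs_two]; ring
    rw [e]
    have h4 : |X| * |u * w| ≤ 4 := by
      calc |X| * |u * w| ≤ 1 * |u * w| := mul_le_mul_of_nonneg_right hX (abs_nonneg _)
        _ ≤ 4 := by rw [one_mul]; exact huw
    nlinarith [abs_nonneg A, mul_le_mul_of_nonneg_left h4 (abs_nonneg A)]
  have h3 : |B*(u*w)| ≤ 4*|B| := by
    rw [abs_mul]
    nlinarith [abs_nonneg B, mul_le_mul_of_nonneg_left huw (abs_nonneg B)]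
  calc |A * u^2 + 2*A*X*(u*w) + B*(u*w)|
      ≤ |A * u^2| + |2*A*X*(u*w)| + |B*(u*w)| := abs_add_three _ _ _
    _ ≤ 9*|A| + 4*|B| := by linarith

lemma fA_bound (x : ℝ) (h0 : 0 < x) (h1 : x < 1) (hirr : Irrational x) (A B C : ℤ)
    (hx : (A:ℝ)*x^2 + B*x + C = 0) (k : ℕ) :
    |fA x A B C k| ≤ 9*(|A| + |B| + |C| + 1) := by
  have hX : |x| ≤ 1 := by rw [abs_of_pos h0]; linarith
  obtain ⟨hu, huw⟩ := pxr_abs x h0 h1 hirr k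
  rw [← abs_mul] at huw
  have hb := abs_quadform_bound (A:ℝ) (B:ℝ)
    (((PQ x k).1 : ℝ) - x * ((RS x k).1 : ℝ)) ((RS x k).1 : ℝ) x hu huw hX
  rw [← fA_eq x A B C hx k] at hb
  have : |(fA x A B C k : ℝ)| ≤ ((9*(|A| + |B| + |C| + 1) : ℤ) : ℝ) := by
    push_cast
    nlinarith [abs_nonneg (A:ℝ), abs_nonneg (B:ℝ), abs_nonneg (C:ℝ)]
  exact_mod_cast this

lemma fC_bound (x : ℝ) (h0 : 0 < x) (h1 : x < 1) (hirr : Irrational x) (A B C : ℤ)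
    (hx : (A:ℝ)*x^2 + B*x + C = 0) (k : ℕ) :
    |fC x A B C k| ≤ 9*(|A| + |B| + |C| + 1) := by
  have hX : |x| ≤ 1 := by rw [abs_of_pos h0]; linarith
  obtain ⟨hu, huw⟩ := qxs_abs x h0 h1 hirr k
  rw [← abs_mul] at huw
  have huw4 : |(((PQ x k).2 : ℝ) - x * ((RS x k).2 : ℝ)) * ((RS x k).2 : ℝ)| ≤ 4 := by
    linarith
  have hb := abs_quadform_bound (A:ℝ) (B:ℝ)
    (((PQ x k).2 : ℝ) - x * ((RS x k).2 : ℝ)) ((RS x k).2 : ℝ) x hu huw4 hX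
  rw [← fC_eq x A B C hx k] at hb
  have : |(fC x A B C k : ℝ)| ≤ ((9*(|A| + |B| + |C| + 1) : ℤ) : ℝ) := by
    push_cast
    nlinarith [abs_nonneg (A:ℝ), abs_nonneg (B:ℝ), abs_nonneg (C:ℝ)]
  exact_mod_cast this

set_option maxHeartbeats 1000000 in
lemma fB_bound (x : ℝ) (h0 : 0 < x) (h1 : x < 1) (hirr : Irrational x) (A B C : ℤ)
    (hx : (A:ℝ)*x^2 + B*x + C = 0) (k : ℕ) :
    |fB x A B C k| ≤ 19*(|A| + |B| + |C| + 1) := by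
  set K0 : ℤ := |A| + |B| + |C| + 1 with hK0
  have hAn := abs_nonneg A
  have hBn := abs_nonneg B
  have hCn := abs_nonneg C
  have hK1 : 1 ≤ K0 := by omega
  have b1 : |A| ≤ K0 := by omega
  have b2 : |B| ≤ K0 := by omega
  have b3 : |C| ≤ K0 := by omega
  have hd2 : ((PQ x k).1 * (RS x k).2 - (PQ x k).2 * (RS x k).1)^2 = 1 := by
    rcases det_pm x k with h | h <;> rw [h] <;> norm_num
  have hdisc := disc_id x A B C k
  rw [hd2, mul_one] at hdisc
  have hA9 := fA_bound x h0 h1 hirr A B C hx k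
  have hC9 := fC_bound x h0 h1 hirr A B C hx k
  rw [← hK0] at hA9 hC9
  have e1 : B^2 ≤ K0^2 := by
    nlinarith [sq_abs B, mul_le_mul b2 b2 hBn (le_trans hBn b2)]
  have e2 : |A*C| ≤ K0^2 := by
    rw [abs_mul]
    nlinarith [mul_le_mul b1 b3 hCn (le_trans hAn b1)]
  have e3 : |fA x A B C k * fC x A B C k| ≤ 81*K0^2 := by
    rw [abs_mul]
    nlinarith [mul_le_mul hA9 hC9 (abs_nonneg (fC x A B C k)) (by linarith : (0:ℤ) ≤ 9*K0)]
  obtain ⟨e2a, e2b⟩ := abs_le.mp e2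
  obtain ⟨e3a, e3b⟩ := abs_le.mp e3
  have hsq : (fB x A B C k)^2 ≤ 361*K0^2 := by nlinarith
  by_contra hcon
  push_neg at hcon
  have hge : 19*K0 + 1 ≤ |fB x A B C k| := hcon
  nlinarith [sq_abs (fB x A B C k),
    mul_le_mul hge hge (by linarith : (0:ℤ) ≤ 19*K0+1) (abs_nonneg _)]

lemma irr_linear (x : ℝ) (hirr : Irrational x) (b c : ℤ) (h : (b:ℝ)*x + c = 0) :
    b = 0 ∧ c = 0 := by
  by_cases hb : b = 0
  · subst hb
    simp only [Int.cast_zero, zero_mul, zero_add] at h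
    exact ⟨rfl, by exact_mod_cast h⟩
  · exfalso
    refine hirr ⟨(-c : ℚ)/(b : ℚ), ?_⟩
    have hb' : (b:ℝ) ≠ 0 := Int.cast_ne_zero.mpr hb
    push_cast
    field_simp
    linarith

lemma fA_ne (x : ℝ) (h0 : 0 < x) (h1 : x < 1) (hirr : Irrational x) (A B C : ℤ)
    (hA : A ≠ 0) (hx : (A:ℝ)*x^2 + B*x + C = 0) (k : ℕ) : fA x A B C k ≠ 0 := by
  intro hz
  have ht := troot x h0 h1 hirr A B C hx k
  rw [hz] at ht
  simp only [Int.cast_zero, zero_mul, zero_add] at ht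
  obtain ⟨-, -, htirr⟩ := orbit x h0 h1 hirr k
  obtain ⟨hb0, hc0⟩ := irr_linear _ htirr _ _ ht
  have hd2 : ((PQ x k).1 * (RS x k).2 - (PQ x k).2 * (RS x k).1)^2 = 1 := by
    rcases det_pm x k with h | h <;> rw [h] <;> norm_num
  have hdisc := disc_id x A B C k
  rw [hd2, mul_one, hz, hb0] at hdisc
  have hB2 : B^2 - 4*A*C = 0 := by linarith [hdisc]
  have hsq : (2*(A:ℝ)*x + B)^2 = 0 := by
    have hB2' : ((B^2 - 4*A*C : ℤ) : ℝ) = 0 := by exact_mod_cast hB2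
    push_cast at hB2'
    linear_combination (4*(A:ℝ))*hx + hB2'
  have hlin : 2*(A:ℝ)*x + B = 0 := by
    have := sq_eq_zero_iff.mp hsq
    exact this
  have : (2*A : ℤ) = 0 ∧ B = 0 := by
    apply irr_linear x hirr
    push_cast
    linarith
  omega

lemma quad_root_finite (a b c : ℤ) :
    {y : ℝ | (a:ℝ)*y^2 + b*y + c = 0 ∧ a ≠ 0}.Finite := by
  by_cases ha : a = 0
  · convert Set.finite_empty
    ext y; simp [ha]
  · rcases Set.eq_empty_or_nonempty {y : ℝ | (a:ℝ)*y^2 + b*y + c = 0 ∧ a ≠ 0} with he | ⟨y0, hy0⟩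
    · rw [he]; exact Set.finite_empty
    · apply Set.Finite.subset ((Set.finite_singleton (-(b:ℝ)/a - y0)).insert y0)
      intro y hy
      simp only [Set.mem_insert_iff, Set.mem_singleton_iff]
      by_cases hyy : y = y0
      · left; exact hyy
      · right
        obtain ⟨hy, -⟩ := hy
        obtain ⟨hy0, -⟩ := hy0
        have ha' : (a:ℝ) ≠ 0 := Int.cast_ne_zero.mpr ha
        have hfac : (y - y0) * ((a:ℝ)*(y + y0) + b) = 0 := by
          linear_combination hy - hy0
        have hsub : y - y0 ≠ 0 := sub_ne_zero.mpr hyy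
        have h2 : (a:ℝ)*(y + y0) + b = 0 := by
          rcases mul_eq_zero.mp hfac with h | h
          · exact absurd h hsub
          · exact h
        field_simp
        linarith

lemma backward_dir (x : ℝ) (h0 : 0 < x) (h1 : x < 1) (hirr : Irrational x)
    (A B C : ℤ) (hA : A ≠ 0) (hx : (A:ℝ)*x^2 + B*x + C = 0) :
    ∃ m n : ℕ, m < n ∧ TO^[m] x = TO^[n] x := by
  set K0 : ℤ := |A| + |B| + |C| + 1 with hK0
  set Z : Set ℝ := {y | ∃ a b c : ℤ, |a| ≤ 9*K0 ∧ |b| ≤ 19*K0 ∧ |c| ≤ 9*K0 ∧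
    a ≠ 0 ∧ (a:ℝ)*y^2 + (b:ℝ)*y + (c:ℝ) = 0} with hZ
  have hfin : Z.Finite := by
    have hsub : Z ⊆ ⋃ p ∈ ((Finset.Icc (-(9*K0)) (9*K0) ×ˢ
        Finset.Icc (-(19*K0)) (19*K0) ×ˢ Finset.Icc (-(9*K0)) (9*K0) :
        Finset (ℤ × ℤ × ℤ)) : Set (ℤ × ℤ × ℤ)),
        {y : ℝ | ((p.1 : ℤ):ℝ)*y^2 + (p.2.1:ℝ)*y + (p.2.2:ℝ) = 0 ∧ p.1 ≠ 0} := by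
      rintro y ⟨a, b, c, ha, hb, hc, hane, heq⟩
      refine Set.mem_biUnion (x := ((a, b, c) : ℤ × ℤ × ℤ)) ?_ ⟨heq, hane⟩
      simp only [Finset.coe_product, Set.mem_prod, Finset.mem_coe, Finset.mem_Icc]
      obtain ⟨ha1, ha2⟩ := abs_le.mp ha
      obtain ⟨hb1, hb2⟩ := abs_le.mp hb
      obtain ⟨hc1, hc2⟩ := abs_le.mp hc
      exact ⟨⟨ha1, ha2⟩, ⟨hb1, hb2⟩, ⟨hc1, hc2⟩⟩
    exact Set.Finite.subset
      (Set.Finite.biUnion (Finset.finite_toSet _)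
        (fun p _ => quad_root_finite p.1 p.2.1 p.2.2)) hsub
  have hmaps : ∀ k : ℕ, TO^[k] x ∈ Z := by
    intro k
    exact ⟨fA x A B C k, fB x A B C k, fC x A B C k,
      fA_bound x h0 h1 hirr A B C hx k, fB_bound x h0 h1 hirr A B C hx k,
      fC_bound x h0 h1 hirr A B C hx k, fA_ne x h0 h1 hirr A B C hA hx k,
      troot x h0 h1 hirr A B C hx k⟩
  obtain ⟨m, -, n, -, hmn, heq⟩ :=
    Set.infinite_univ.exists_ne_map_eq_of_mapsTo
      (f := fun k : ℕ => TO^[k] x) (fun k _ => hmaps k) hfin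
  rcases lt_trichotomy m n with h | h | h
  · exact ⟨m, n, h, heq⟩
  · exact absurd h hmn
  · exact ⟨n, m, h, heq.symm⟩

lemma forward_dir (x : ℝ) (h0 : 0 < x) (h1 : x < 1) (hirr : Irrational x)
    (m n : ℕ) (hmn : m < n) (heq : TO^[m] x = TO^[n] x) :
    ∃ A B C : ℤ, A ≠ 0 ∧ (A:ℝ)*x^2 + (B:ℝ)*x + (C:ℝ) = 0 := by
  obtain ⟨hy0, hy1, hyirr⟩ := orbit x h0 h1 hirr m
  set y := TO^[m] x with hy
  obtain ⟨l, hl⟩ : ∃ l, n - m = l + 1 := ⟨n - m - 1, by omega⟩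
  have hyper : TO^[n - m] y = y := by
    rw [hy, ← Function.iterate_add_apply]
    have hnm : n - m + m = n := by omega
    rw [hnm, ← heq]
  have hmainy := main_id y hy0 hy1 hyirr (n - m)
  rw [hyper] at hmainy
  set R1 := (RS y (n - m)).1 with hR1
  set S1 := (RS y (n - m)).2 with hS1
  set P1 := (PQ y (n - m)).1 with hP1
  set Q1 := (PQ y (n - m)).2 with hQ1
  have hA1 : R1 ≠ 0 := by
    rw [hR1, hl]
    simp only [RS]
    have hSl : 1 ≤ (RS y l).2 := (S_inv y hy0 hy1 hyirr l).1
    rcases epsO_cases (TO^[l] y) with he | he <;> rw [he] <;>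
      simp <;> omega
  have hq : (R1:ℝ)*y^2 + ((S1 - P1 : ℤ):ℝ)*y + ((-Q1 : ℤ):ℝ) = 0 := by
    push_cast
    linear_combination hmainy
  have hmainx := main_id x h0 h1 hirr m
  rw [← hy] at hmainx
  set R := (RS x m).1 with hR
  set S := (RS x m).2 with hS
  set P := (PQ x m).1 with hP
  set Q := (PQ x m).2 with hQ
  set A1 : ℤ := R1 with hA1d
  set B1 : ℤ := S1 - P1 with hB1d
  set C1 : ℤ := -Q1 with hC1d
  set A2 : ℤ := A1*S^2 - B1*S*R + C1*R^2 with hA2d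
  set B2 : ℤ := -2*A1*Q*S + B1*(P*S + Q*R) - 2*C1*P*R with hB2d
  set C2 : ℤ := A1*Q^2 - B1*Q*P + C1*P^2 with hC2d
  have h2 : (A2:ℝ)*x^2 + (B2:ℝ)*x + (C2:ℝ) = 0 := by
    rw [hA2d, hB2d, hC2d]
    push_cast
    linear_combination (((P:ℝ) - x*R)^2) * hq
      + (((A1:ℤ):ℝ)*(y*((P:ℝ) - x*R) + (x*(S:ℝ) - Q)) + ((B1:ℤ):ℝ)*((P:ℝ) - x*R)) * hmainx
  by_cases hA2 : A2 = 0
  · exfalso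
    rw [hA2] at h2
    simp only [Int.cast_zero, zero_mul, zero_add] at h2
    obtain ⟨hB2z, hC2z⟩ := irr_linear x hirr B2 C2 h2
    have hkey : A1 * (P*S - Q*R)^2 = A2*P^2 + B2*P*R + C2*R^2 := by
      rw [hA2d, hB2d, hC2d, hB1d, hC1d]
      ring
    rw [hA2, hB2z, hC2z] at hkey
    simp only [zero_mul, mul_zero, add_zero, zero_add] at hkey
    have hd2 : (P*S - Q*R)^2 = 1 := by
      rcases det_pm x m with h | h <;> rw [← hP, ← hQ, ← hR, ← hS] at h <;> rw [h] <;> norm_num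
    rw [hd2, mul_one] at hkey
    exact hA1 hkey
  · exact ⟨A2, B2, C2, hA2, h2⟩

/-- Proposition 8: an irrational `x ∈ (0,1)` has eventually periodic odd
continued fraction expansion iff `x` is a quadratic irrational. -/
theorem eventually_periodic_OCF_iff_quadratic_surd (x : ℝ)
    (h0 : 0 < x) (h1 : x < 1) (hirr : Irrational x) :
    (∃ m n : ℕ, m < n ∧ TO^[m] x = TO^[n] x) ↔
    ∃ A B C : ℤ, A ≠ 0 ∧ (A : ℝ) * x ^ 2 + (B : ℝ) * x + (C : ℝ) = 0 := by
  constructor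
  · rintro ⟨m, n, hmn, heq⟩
    exact forward_dir x h0 h1 hirr m n hmn heq
  · rintro ⟨A, B, C, hA, hx⟩
    exact backward_dir x h0 h1 hirr A B C hA hx
end
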